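/- The X-relation for local P^2 (eq. (5.1) of the paper, used to show that the differential ring 𝔾_2[X, 𝖣X, 𝖣𝖣X, …] equals 𝔾_2[X]): In ℚ[[q]] define I_1 = 3·Σ_{d≥1} (−1)^d (3d−1)!/(d!)^3 q^d, C_1 = 1 + 𝖣I_1 (invertible since its constant term is 1), and X = (𝖣C_1)/C_1, where 𝖣 = q·d/dq. Then X^2 − ((1+27q)^{−1} − 1)·X + 𝖣X − (2/9)·((1+27q)^{−1} − 1) = 0 in ℚ[[q]]. Equivalently, with L ∈ ℚ[[q]] the unique power series with constant term 1 satisfying L^3·(1+27q) = 1, one has X^2 − (L^3−1)X + 𝖣X − (2/9)(L^3−1) = 0. -/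

import Mathlib

/-!
STATEMENT 7: The X-relation for local P^2:
In ℚ[[q]] define I₁ = 3·Σ_{d≥1} (−1)^d (3d−1)!/(d!)^3 q^d, C₁ = 1 + 𝖣I₁,
X = (𝖣C₁)/C₁ with 𝖣 = q·d/dq.  Then
X² − ((1+27q)⁻¹ − 1)·X + 𝖣X − (2/9)·((1+27q)⁻¹ − 1) = 0.
-/

noncomputable section

/-- The derivation `𝖣 = q·d/dq` on `ℚ[[q]]`. -/
def Dq (G : PowerSeries ℚ) : PowerSeries ℚ :=
  PowerSeries.mk fun d => (d : ℚ) * PowerSeries.coeff d G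

/-- `I₁ = 3·Σ_{d≥1} (−1)^d (3d−1)!/(d!)^3 q^d`. -/
def I₁ : PowerSeries ℚ :=
  PowerSeries.mk fun d => if d = 0 then 0 else
    3 * (-1 : ℚ) ^ d * ((3 * d - 1).factorial : ℚ) / ((d.factorial : ℚ)) ^ 3

/-- `C₁ = 1 + 𝖣I₁`. -/
def C₁ : PowerSeries ℚ := 1 + Dq I₁

/-- `X = (𝖣C₁)/C₁`. -/
def Xser : PowerSeries ℚ := Dq C₁ * C₁⁻¹

open PowerSeries in
lemma Dq_eq (f : ℚ⟦X⟧) : Dq f = PowerSeries.X * (d⁄dX ℚ f) := by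
  ext d
  cases d with
  | zero => simp [Dq, PowerSeries.coeff_mk]
  | succ n => simp [Dq, PowerSeries.coeff_mk, PowerSeries.coeff_succ_X_mul,
      PowerSeries.coeff_derivative]; ring

open PowerSeries in
lemma Dq_mul (f g : ℚ⟦X⟧) : Dq (f * g) = Dq f * g + f * Dq g := by
  simp [Dq_eq, Derivation.leibniz, smul_eq_mul]; ring

open PowerSeries in
lemma Dq_one : Dq (1 : ℚ⟦X⟧) = 0 := by simp [Dq_eq]

/-- The exact coefficients of `C₁`. -/
def aa (d : ℕ) : ℚ := (-1 : ℚ)^d * ((3*d).factorial : ℚ) / ((d.factorial : ℚ))^3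

lemma coeff_C₁ (d : ℕ) : PowerSeries.coeff d C₁ = aa d := by
  cases d with
  | zero => simp [C₁, Dq, I₁, PowerSeries.coeff_mk, aa]
  | succ n =>
    have h1 : PowerSeries.coeff (n+1) (1 : PowerSeries ℚ) = 0 := by
      simp [PowerSeries.coeff_one]
    simp only [C₁, map_add, h1, zero_add, Dq, I₁, PowerSeries.coeff_mk]
    rw [if_neg (Nat.succ_ne_zero n)]
    have h2 : 3 * (n+1) - 1 = 3*n + 2 := by omega
    have h3 : ((3*(n+1)).factorial : ℚ) = (3*(n:ℚ)+3) * ((3*n+2).factorial : ℚ) := by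
      have : 3*(n+1) = (3*n+2) + 1 := by omega
      rw [this, Nat.factorial_succ]
      push_cast; ring
    rw [aa, h2, h3]
    have hfac : ((n+1).factorial : ℚ) ≠ 0 := Nat.cast_ne_zero.2 (Nat.factorial_ne_zero _)
    field_simp
    push_cast
    ring

lemma hrec (n : ℕ) : ((n:ℚ)+1)^2 * aa (n+1) + (27*(n:ℚ)^2 + 27*(n:ℚ) + 6) * aa n = 0 := by
  have h3 : ((3*(n+1)).factorial : ℚ)
      = (3*(n:ℚ)+3) * (3*(n:ℚ)+2) * (3*(n:ℚ)+1) * ((3*n).factorial : ℚ) := by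
    have e : 3*(n+1) = ((3*n+1) + 1) + 1 := by omega
    rw [e, Nat.factorial_succ, Nat.factorial_succ, Nat.factorial_succ]
    push_cast; ring
  have h4 : (((n+1).factorial : ℚ)) = ((n:ℚ)+1) * (n.factorial : ℚ) := by
    rw [Nat.factorial_succ]; push_cast; ring
  have hf : ((n.factorial : ℚ)) ≠ 0 := Nat.cast_ne_zero.2 (Nat.factorial_ne_zero _)
  have hn1 : ((n:ℚ)+1) ≠ 0 := by positivity
  rw [aa, aa, h3, h4]
  field_simp
  ring

lemma c27 : (27 : PowerSeries ℚ) = PowerSeries.C (R := ℚ) 27 := (map_ofNat (PowerSeries.C (R := ℚ)) 27).symm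
lemma c6 : (6 : PowerSeries ℚ) = PowerSeries.C (R := ℚ) 6 := (map_ofNat (PowerSeries.C (R := ℚ)) 6).symm

lemma coeff_DqDq (d : ℕ) : PowerSeries.coeff d (Dq (Dq C₁)) = (d:ℚ)^2 * aa d := by
  simp [Dq, PowerSeries.coeff_mk, coeff_C₁]; ring

/-- The hypergeometric ODE satisfied by `C₁`. -/
lemma ode : (1 + 27 * PowerSeries.X) * Dq (Dq C₁) + 27 * (PowerSeries.X * Dq C₁)
    + 6 * (PowerSeries.X * C₁) = 0 := by
  ext d
  rw [add_mul, one_mul, mul_assoc]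
  cases d with
  | zero =>
    simp [Dq, PowerSeries.coeff_mk, c27, c6, PowerSeries.coeff_C_mul]
  | succ n =>
    rw [map_add, map_add, map_add, c27, c6, PowerSeries.coeff_C_mul,
      PowerSeries.coeff_C_mul, PowerSeries.coeff_C_mul,
      PowerSeries.coeff_succ_X_mul, PowerSeries.coeff_succ_X_mul,
      PowerSeries.coeff_succ_X_mul, coeff_DqDq, coeff_DqDq]
    simp only [Dq, PowerSeries.coeff_mk, coeff_C₁, map_zero]
    push_cast
    nlinarith [hrec n]

theorem stmt7 :
    Xser ^ 2 - ((1 + 27 * PowerSeries.X)⁻¹ - 1) * Xser + Dq Xser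
      - PowerSeries.C (2 / 9 : ℚ) * ((1 + 27 * PowerSeries.X)⁻¹ - 1) = 0 := by
  have hc0 : PowerSeries.constantCoeff C₁ ≠ 0 := by
    rw [← PowerSeries.coeff_zero_eq_constantCoeff_apply, coeff_C₁ 0]
    simp [aa]
  have hu0 : PowerSeries.constantCoeff (1 + 27 * PowerSeries.X : PowerSeries ℚ) ≠ 0 := by
    simp
  have h1 : C₁ * C₁⁻¹ = 1 := PowerSeries.mul_inv_cancel _ hc0
  have h2 : (1 + 27 * PowerSeries.X : PowerSeries ℚ) * (1 + 27 * PowerSeries.X)⁻¹ = 1 :=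
    PowerSeries.mul_inv_cancel _ hu0
  have hdi : Dq (C₁⁻¹) = -(Dq C₁ * C₁⁻¹ * C₁⁻¹) := by
    have := congrArg Dq h1
    rw [Dq_mul, Dq_one] at this
    linear_combination C₁⁻¹ * this - Dq (C₁⁻¹) * h1
  have hk : PowerSeries.C (R := ℚ) (2/9) * 27 = 6 := by
    rw [(map_ofNat (PowerSeries.C (R := ℚ)) 27).symm, ← map_mul,
      show (2/9 : ℚ) * 27 = 6 by norm_num]
    exact map_ofNat _ 6
  rw [Xser, Dq_mul, hdi]
  linear_combination (C₁⁻¹ * (1 + 27 * PowerSeries.X)⁻¹) * ode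
    + (-(Dq (Dq C₁) * C₁⁻¹) - Dq C₁ * C₁⁻¹ - PowerSeries.C (R := ℚ) (2/9)) * h2
    - (27 * PowerSeries.C (R := ℚ) (2/9) * PowerSeries.X * (1 + 27 * PowerSeries.X)⁻¹) * h1
    + (PowerSeries.X * C₁ * C₁⁻¹ * (1 + 27 * PowerSeries.X)⁻¹) * hk

end
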